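/- Let Γ be a finitely generated group and let H be a subgroup of Γ of finite index. Then H is finitely generated, and for any finite generating set T of H and any finite generating set S of Γ, the inclusion map H → Γ is a quasi-isometry from the Cayley graph Δ(H,T) to the Cayley graph Δ(Γ,S), both equipped with their graph distances. -/

import Mathlib

/-- The Cayley graph of a group `Γ` with respect to a generating set `S`:
vertices are group elements, and `g ≠ h` are adjacent iff `g⁻¹ * h ∈ S ∪ S⁻¹`. -/
def cayleyGraph {Γ : Type*} [Group Γ] (S : Set Γ) : SimpleGraph Γ where
  Adj g h := g ≠ h ∧ g⁻¹ * h ∈ S ∪ S⁻¹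
  symm := by
    constructor
    rintro g h ⟨hne, hm⟩
    refine ⟨hne.symm, ?_⟩
    have : h⁻¹ * g = (g⁻¹ * h)⁻¹ := by group
    rw [this]
    rcases hm with h1 | h1
    · exact Or.inr (by simpa using h1)
    · exact Or.inl (by simpa using h1)
  loopless := ⟨fun g h => h.1 rfl⟩

/-- A map between the vertex sets of two graphs is a quasi-isometry with respect
to the graph distances: it is bi-Lipschitz up to bounded error and has cobounded image. -/
def IsGraphQuasiIsometry {V W : Type*} (G : SimpleGraph V) (H : SimpleGraph W)
    (f : V → W) : Prop :=
  (∃ k₁ > (0 : ℝ), ∃ k₂ ≥ (0 : ℝ), ∃ k₃ ≥ (0 : ℝ), ∃ k₄ ≥ (0 : ℝ),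
    ∀ x₁ x₂ : V,
      k₁ * (G.dist x₁ x₂ : ℝ) - k₂ ≤ (H.dist (f x₁) (f x₂) : ℝ) ∧
      (H.dist (f x₁) (f x₂) : ℝ) ≤ k₃ * (G.dist x₁ x₂ : ℝ) + k₄) ∧
  (∃ r ≥ (0 : ℝ), ∀ y : W, ∃ x : V, (H.dist y (f x) : ℝ) ≤ r)

open SimpleGraph

namespace CayleyAux

variable {G : Type*} [Group G]

/-- Left multiplication as a graph hom of the Cayley graph. -/
def mulLeftHom (S : Set G) (c : G) : cayleyGraph S →g cayleyGraph S where
  toFun := fun x => c * x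
  map_rel' := by
    rintro a b ⟨hne, hm⟩
    refine ⟨by simpa using hne, ?_⟩
    have : (c * a)⁻¹ * (c * b) = a⁻¹ * b := by group
    rw [this]; exact hm

lemma reachable_mulLeft {S : Set G} (c : G) {a b : G}
    (h : (cayleyGraph S).Reachable a b) :
    (cayleyGraph S).Reachable (c * a) (c * b) :=
  h.map (mulLeftHom S c)

lemma dist_mulLeft_le (S : Set G) (c a b : G) :
    (cayleyGraph S).dist (c * a) (c * b) ≤ (cayleyGraph S).dist a b := by
  by_cases hr : (cayleyGraph S).Reachable a b
  · obtain ⟨p, hp⟩ := hr.exists_walk_length_eq_dist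
    calc (cayleyGraph S).dist (c * a) (c * b) ≤ (p.map (mulLeftHom S c)).length :=
          dist_le _
      _ = p.length := p.length_map _
      _ = _ := hp
  · have hr' : ¬ (cayleyGraph S).Reachable (c * a) (c * b) := by
      intro h
      have := reachable_mulLeft c⁻¹ h
      exact hr (by simpa [mul_assoc] using this)
    rw [dist_eq_zero_of_not_reachable hr, dist_eq_zero_of_not_reachable hr']

lemma dist_mulLeft (S : Set G) (c a b : G) :
    (cayleyGraph S).dist (c * a) (c * b) = (cayleyGraph S).dist a b := by
  refine le_antisymm (dist_mulLeft_le S c a b) ?_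
  have := dist_mulLeft_le S c⁻¹ (c * a) (c * b)
  simpa [mul_assoc] using this

lemma dist_eq_dist_one (S : Set G) (a b : G) :
    (cayleyGraph S).dist a b = (cayleyGraph S).dist 1 (a⁻¹ * b) := by
  have := dist_mulLeft S a 1 (a⁻¹ * b)
  simpa [mul_assoc] using this

lemma cayley_connected {S : Set G} (hS : Subgroup.closure S = ⊤) :
    (cayleyGraph S).Connected := by
  rw [connected_iff]
  refine ⟨fun a b => ?_, ⟨1⟩⟩
  have key : ∀ g : G, (cayleyGraph S).Reachable 1 g := by
    intro g
    have hg : g ∈ Subgroup.closure S := by rw [hS]; trivial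
    induction hg using Subgroup.closure_induction with
    | mem s hs =>
        by_cases h1 : s = 1
        · rw [h1]
        · exact (Adj.reachable ⟨fun h => h1 h.symm, by simpa using Or.inl hs⟩)
    | one => exact Reachable.refl 1
    | mul a b _ _ iha ihb =>
        exact iha.trans (by simpa using reachable_mulLeft a ihb)
    | inv a _ iha =>
        have := reachable_mulLeft a⁻¹ iha
        simpa using this.symm
  exact (key a).symm.trans (key b)

lemma dist_one_inv (S : Set G) (a : G) :
    (cayleyGraph S).dist 1 a⁻¹ = (cayleyGraph S).dist 1 a := by
  have := dist_mulLeft S a 1 a⁻¹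
  simp only [mul_one, mul_inv_cancel] at this
  rw [← this, SimpleGraph.dist_comm]

end CayleyAux

open CayleyAux

/-- **Finite-index subgroups are finitely generated and quasi-isometric to the
ambient group.** If `Γ` is finitely generated and `H ≤ Γ` has finite index, then `H`
is finitely generated, and for any finite generating sets `T` of `H` and `S` of `Γ`,
the inclusion `H → Γ` is a quasi-isometry of Cayley graphs. -/
theorem subgroup_finiteIndex_quasiIsometric
    {Γ : Type*} [Group Γ] (hΓ : Group.FG Γ)
    (H : Subgroup Γ) (hfi : H.index ≠ 0) :
    Group.FG H ∧
    ∀ (T : Finset H) (S : Finset Γ),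
      Subgroup.closure (T : Set H) = ⊤ → Subgroup.closure (S : Set Γ) = ⊤ →
      IsGraphQuasiIsometry (cayleyGraph (T : Set H)) (cayleyGraph (S : Set Γ))
        (fun h => (h : Γ)) := by
  haveI : H.FiniteIndex := ⟨hfi⟩
  refine ⟨H.fg_of_index_ne_zero, ?_⟩
  intro T S hT hS
  classical
  -- abbreviations
  set GS := cayleyGraph (S : Set Γ) with hGS
  set GT := cayleyGraph ((T : Finset H) : Set H) with hGT
  have connS : GS.Connected := cayley_connected hS
  have connT : GT.Connected := cayley_connected hT
  -- right coset machinery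
  haveI : Finite (Γ ⧸ H) := H.finite_quotient_of_finiteIndex
  haveI : Finite (Quotient (QuotientGroup.rightRel H)) :=
    Finite.of_equiv _ (QuotientGroup.quotientRightRelEquivQuotientLeftRel H).symm
  haveI : Fintype (Quotient (QuotientGroup.rightRel H)) := Fintype.ofFinite _
  set Q := Quotient (QuotientGroup.rightRel H) with hQ
  let rep : Γ → Γ := fun g => (Quotient.mk (QuotientGroup.rightRel H) g : Q).out
  have hrep : ∀ g : Γ, g * (rep g)⁻¹ ∈ H := by
    intro g
    have : (QuotientGroup.rightRel H) (rep g) g := Quotient.mk_out g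
    rwa [QuotientGroup.rightRel_apply] at this
  have rep_mul : ∀ h : Γ, h ∈ H → ∀ g : Γ, rep (h * g) = rep g := by
    intro h hh g
    have : (Quotient.mk (QuotientGroup.rightRel H) (h * g) : Q)
        = Quotient.mk (QuotientGroup.rightRel H) g := by
      exact Quotient.sound ((QuotientGroup.rightRel_apply).mpr (by simpa using (inv_mem hh : h⁻¹ ∈ H)))
    simp only [rep, this]
  set r₀ : Γ := rep 1 with hr₀def
  have hr₀ : r₀⁻¹ ∈ H := by simpa using hrep 1
  have rep_coe : ∀ h : H, rep (h : Γ) = r₀ := by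
    intro h
    have := rep_mul (h : Γ) h.2 1
    simpa using this
  -- Upper bound (Lipschitz)
  let k3 : ℕ := T.sup fun t => GS.dist 1 (t : Γ)
  have step3 : ∀ x y : H, GT.Adj x y → GS.dist (x : Γ) (y : Γ) ≤ k3 := by
    intro x y hxy
    rw [dist_eq_dist_one]
    have hco : (x : Γ)⁻¹ * (y : Γ) = ((x⁻¹ * y : H) : Γ) := rfl
    rw [hco]
    rcases hxy.2 with hm | hm
    · exact Finset.le_sup (f := fun t : H => GS.dist 1 (t : Γ)) (Finset.mem_coe.mp hm)
    · have hm' : (x⁻¹ * y)⁻¹ ∈ (T : Set H) := Set.mem_inv.mp hm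
      have h1 : (((x⁻¹ * y : H) : Γ)) = (((x⁻¹ * y)⁻¹ : H) : Γ)⁻¹ := by
        push_cast; group
      rw [h1, dist_one_inv]
      exact Finset.le_sup (f := fun t : H => GS.dist 1 (t : Γ)) (Finset.mem_coe.mp hm')
  have walk3 : ∀ {x y : H} (p : GT.Walk x y), GS.dist (x : Γ) (y : Γ) ≤ k3 * p.length := by
    intro x y p
    induction p with
    | nil => simp
    | @cons u v w hadj p ih =>
        rw [SimpleGraph.Walk.length_cons, Nat.mul_add, Nat.mul_one]
        calc GS.dist (u : Γ) (w : Γ) ≤ GS.dist (u : Γ) (v : Γ) + GS.dist (v : Γ) (w : Γ) :=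
              connS.dist_triangle
          _ ≤ k3 + k3 * p.length := Nat.add_le_add (step3 _ _ hadj) ih
          _ = k3 * p.length + k3 := Nat.add_comm _ _
  have upper : ∀ x y : H, GS.dist (x : Γ) (y : Γ) ≤ k3 * GT.dist x y := by
    intro x y
    obtain ⟨p, hp⟩ := connT.exists_walk_length_eq_dist x y
    calc GS.dist (x : Γ) (y : Γ) ≤ k3 * p.length := walk3 p
      _ = k3 * GT.dist x y := by rw [hp]
  -- Lower bound constant
  have hSfin : ((S : Set Γ) ∪ (S : Set Γ)⁻¹).Finite := S.finite_toSet.union S.finite_toSet.inv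
  haveI : Finite (((S : Set Γ) ∪ (S : Set Γ)⁻¹ : Set Γ)) := hSfin.to_subtype
  set D : Set ℕ := {n | ∃ h : H, (∃ (q₁ q₂ : Q) (s : Γ), s ∈ (S : Set Γ) ∪ (S : Set Γ)⁻¹ ∧
      (h : Γ) = q₁.out * s * q₂.out⁻¹) ∧ n = GT.dist 1 h} with hDdef
  have hDfin : D.Finite := by
    have hsub : D ⊆ Set.range (fun p : Q × (((S : Set Γ) ∪ (S : Set Γ)⁻¹ : Set Γ)) × Q =>
        if hm : (p.1.out * (p.2.1 : Γ) * p.2.2.out⁻¹) ∈ H then GT.dist 1 ⟨_, hm⟩ else 0) := by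
      rintro n ⟨h, ⟨q₁, q₂, s, hs, hEq⟩, rfl⟩
      refine ⟨⟨q₁, ⟨s, hs⟩, q₂⟩, ?_⟩
      have hmem : q₁.out * s * q₂.out⁻¹ ∈ H := hEq ▸ h.2
      simp only [dif_pos hmem]
      congr 1
      exact Subtype.ext hEq.symm
    exact (Set.finite_range _).subset hsub
  obtain ⟨C, hC⟩ := hDfin.bddAbove
  -- key induction over walks in the big Cayley graph
  have key : ∀ {g g' : Γ} (p : GS.Walk g g'),
      GT.dist ⟨g * (rep g)⁻¹, hrep g⟩ ⟨g' * (rep g')⁻¹, hrep g'⟩ ≤ C * p.length := by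
    intro g g' p
    induction p with
    | nil => simp
    | @cons g m g' hadj p ih =>
        rw [SimpleGraph.Walk.length_cons, Nat.mul_add, Nat.mul_one]
        have h1 : GT.dist ⟨g * (rep g)⁻¹, hrep g⟩ ⟨m * (rep m)⁻¹, hrep m⟩ ≤ C := by
          apply hC
          refine ⟨(⟨g * (rep g)⁻¹, hrep g⟩ : H)⁻¹ * ⟨m * (rep m)⁻¹, hrep m⟩,
            ⟨Quotient.mk (QuotientGroup.rightRel H) g,
             Quotient.mk (QuotientGroup.rightRel H) m, g⁻¹ * m, hadj.2, ?_⟩, ?_⟩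
          · show (g * (rep g)⁻¹)⁻¹ * (m * (rep m)⁻¹) = rep g * (g⁻¹ * m) * (rep m)⁻¹
            group
          · exact dist_eq_dist_one _ _ _
        calc GT.dist ⟨g * (rep g)⁻¹, hrep g⟩ ⟨g' * (rep g')⁻¹, hrep g'⟩
            ≤ GT.dist ⟨g * (rep g)⁻¹, hrep g⟩ ⟨m * (rep m)⁻¹, hrep m⟩
              + GT.dist ⟨m * (rep m)⁻¹, hrep m⟩ ⟨g' * (rep g')⁻¹, hrep g'⟩ :=
              connT.dist_triangle
          _ ≤ C + C * p.length := Nat.add_le_add h1 ih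
          _ = C * p.length + C := Nat.add_comm _ _
  set Dc : ℕ := GT.dist 1 (⟨r₀⁻¹, hr₀⟩ : H) with hDcdef
  have bridge : ∀ h : H, GT.dist h ⟨(h : Γ) * (rep (h : Γ))⁻¹, hrep (h : Γ)⟩ = Dc := by
    intro h
    rw [dist_eq_dist_one]
    congr 1
    apply Subtype.ext
    show (h : Γ)⁻¹ * ((h : Γ) * (rep (h : Γ))⁻¹) = r₀⁻¹
    rw [rep_coe h]; group
  have lower : ∀ h₁ h₂ : H, GT.dist h₁ h₂ ≤ C * GS.dist (h₁ : Γ) (h₂ : Γ) + 2 * Dc := by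
    intro h₁ h₂
    obtain ⟨p, hp⟩ := connS.exists_walk_length_eq_dist (h₁ : Γ) (h₂ : Γ)
    calc GT.dist h₁ h₂
        ≤ GT.dist h₁ ⟨(h₁ : Γ) * (rep (h₁ : Γ))⁻¹, hrep _⟩
          + GT.dist ⟨(h₁ : Γ) * (rep (h₁ : Γ))⁻¹, hrep _⟩ ⟨(h₂ : Γ) * (rep (h₂ : Γ))⁻¹, hrep _⟩
          + GT.dist ⟨(h₂ : Γ) * (rep (h₂ : Γ))⁻¹, hrep _⟩ h₂ := by
          refine (connT.dist_triangle (v := ⟨(h₂ : Γ) * (rep (h₂ : Γ))⁻¹, hrep _⟩)).trans ?_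
          exact Nat.add_le_add_right (connT.dist_triangle (v := ⟨(h₁ : Γ) * (rep (h₁ : Γ))⁻¹, hrep _⟩)) _
      _ ≤ Dc + C * p.length + Dc := by
          refine Nat.add_le_add (Nat.add_le_add ?_ (key p)) ?_
          · exact le_of_eq (bridge h₁)
          · rw [SimpleGraph.dist_comm]
            exact le_of_eq (bridge h₂)
      _ = C * GS.dist (h₁ : Γ) (h₂ : Γ) + 2 * Dc := by rw [hp]; ring
  -- coboundedness constant
  let r : ℕ := Finset.univ.sup fun q : Q => GS.dist 1 q.out
  have cob : ∀ y : Γ, GS.dist y ((⟨y * (rep y)⁻¹, hrep y⟩ : H) : Γ) ≤ r := by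
    intro y
    rw [dist_eq_dist_one]
    have h1 : y⁻¹ * (y * (rep y)⁻¹) = (rep y)⁻¹ := by group
    rw [h1, dist_one_inv]
    exact Finset.le_sup (f := fun q : Q => GS.dist 1 q.out)
      (Finset.mem_univ (Quotient.mk (QuotientGroup.rightRel H) y))
  -- assemble
  constructor
  · refine ⟨1 / ((C : ℝ) + 1), by positivity, 2 * (Dc : ℝ), by positivity,
      (k3 : ℝ), by positivity, 0, le_refl 0, ?_⟩
    intro x₁ x₂
    have hl : (GT.dist x₁ x₂ : ℝ) ≤ (C : ℝ) * (GS.dist (x₁ : Γ) (x₂ : Γ) : ℝ) + 2 * (Dc : ℝ) := by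
      exact_mod_cast lower x₁ x₂
    have hu : (GS.dist (x₁ : Γ) (x₂ : Γ) : ℝ) ≤ (k3 : ℝ) * (GT.dist x₁ x₂ : ℝ) := by
      exact_mod_cast upper x₁ x₂
    have hpos : (0 : ℝ) < (C : ℝ) + 1 := by positivity
    have hdS : (0 : ℝ) ≤ (GS.dist (x₁ : Γ) (x₂ : Γ) : ℝ) := Nat.cast_nonneg _
    have hDc0 : (0 : ℝ) ≤ (Dc : ℝ) := Nat.cast_nonneg _
    have hC0 : (0 : ℝ) ≤ (C : ℝ) := Nat.cast_nonneg _
    constructor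
    · have h2 : (1 / ((C : ℝ) + 1)) * (GT.dist x₁ x₂ : ℝ)
          ≤ (GS.dist (x₁ : Γ) (x₂ : Γ) : ℝ) + 2 * (Dc : ℝ) := by
        rw [one_div, inv_mul_le_iff₀ hpos]
        nlinarith
      linarith
    · linarith
  · refine ⟨(r : ℝ), Nat.cast_nonneg _, ?_⟩
    intro y
    refine ⟨⟨y * (rep y)⁻¹, hrep y⟩, ?_⟩
    exact_mod_cast cob y
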